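/- Let 0 < α < β < 1 and consider the points a = (0,0), b = (1−α,0), c = (1−β, 1−(1−β)/(1−α)), d = (0, 1−α(1−β)/((1−α)β)) in ℝ². Then the midpoint (b + d)/2 lies on the straight line through a and c if and only if β(2−α) = 1. (This condition characterizes exactly when the quadrangle Q(α,β) is an affine image of a kite, since for these quadrangles only the diagonal ac can bisect the diagonal bd.) -/

import Mathlib

open Set

/-- For `0 < α < β < 1` and the vertices `a = (0,0)`, `b = (1−α,0)`,
`c = (1−β, 1−(1−β)/(1−α))`, `d = (0, 1−α(1−β)/((1−α)β))` of `Q(α,β)`, the midpoint of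
`b` and `d` lies on the straight line through `a` and `c` if and only if
`β(2−α) = 1`; i.e. `Q(α,β)` is an affine kite iff `β(2−α) = 1`. -/
theorem affine_kite_iff (α β : ℝ) (hα : 0 < α) (hαβ : α < β) (hβ : β < 1) :
    midpoint ℝ ((1 - α, 0) : ℝ × ℝ) ((0, 1 - α * (1 - β) / ((1 - α) * β)) : ℝ × ℝ) ∈
      affineSpan ℝ ({((0 : ℝ), (0 : ℝ)),
        ((1 - β, 1 - (1 - β) / (1 - α)) : ℝ × ℝ)} : Set (ℝ × ℝ)) ↔
    β * (2 - α) = 1 := by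
  have ha : (1:ℝ) - α ≠ 0 := by nlinarith
  have hb2 : (1:ℝ) - β ≠ 0 := by nlinarith
  have hb0 : β ≠ 0 := by nlinarith
  have hd : β - α ≠ 0 := by nlinarith
  set m : ℝ × ℝ := midpoint ℝ ((1 - α, 0) : ℝ × ℝ) ((0, 1 - α * (1 - β) / ((1 - α) * β)) : ℝ × ℝ) with hm
  have key := vadd_left_mem_affineSpan_pair (k := ℝ) (p₁ := ((0:ℝ),(0:ℝ)))
      (p₂ := ((1 - β, 1 - (1 - β) / (1 - α)) : ℝ × ℝ)) (v := m)
  have hmv : m +ᵥ ((0:ℝ),(0:ℝ)) = m := by simp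
  rw [hmv] at key
  rw [key]
  have hm1 : m.1 = (1 - α) / 2 := by
    simp [hm, midpoint, AffineMap.lineMap_apply, Prod.ext_iff]; ring
  have hm2 : m.2 = (1 - α * (1 - β) / ((1 - α) * β)) / 2 := by
    simp [hm, midpoint, AffineMap.lineMap_apply, Prod.ext_iff]; ring
  constructor
  · rintro ⟨r, hr⟩
    have h1 : r * (1 - β) = m.1 := congrArg Prod.fst (by simpa using hr)
    have h2 : r * (1 - (1 - β) / (1 - α)) = m.2 := congrArg Prod.snd (by simpa using hr)
    rw [hm1] at h1; rw [hm2] at h2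
    have hr' : r = (1 - α) / (2 * (1 - β)) := by field_simp at h1 ⊢; linarith
    subst hr'
    field_simp at h2
    have e : (β * (2 - α) - 1) * (2 * (1 - α) * (β - α)) = 0 := by linear_combination (2*(1-α)) * h2
    rcases mul_eq_zero.1 e with h | h
    · linarith
    · exfalso
      have : (2:ℝ) * (1 - α) * (β - α) ≠ 0 := by positivity
      exact this h
  · intro h
    refine ⟨(1 - α) / (2 * (1 - β)), ?_⟩
    have hme : m = ((1 - α)/2, (1 - α * (1 - β) / ((1 - α) * β)) / 2) := Prod.ext hm1 hm2
    rw [hme]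
    simp [Prod.ext_iff, Prod.smul_def]
    constructor
    · field_simp
    · field_simp
      linear_combination (β-α) * h
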